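/- arXiv:2403.04108 — 3 statements merged into one kernel-verified Lean document; each statement's English description precedes it below -/
import Mathlib

section
/- Let X be a Markov chain on ℕ² started at (0,0), with two-step drift bound: there exists δ > 0 such that for all k ≥ 1 and all possible values of X_{2k−2}, the conditional expectation of (x_{2k} − y_{2k}) − (x_{2k−2} − y_{2k−2}) given X_{2k−2} is at least δ, and each two-step increment of x − y lies in {−2, 0, 2}. Then P(x_{2k} = y_{2k}) decays exponentially in k, and consequently ∑_{k≥1} P(X_{2k} = (0,0)) < ∞. -/
set_option maxHeartbeats 1000000


open MeasureTheory

/-- Let `X` be a Markov chain on `ℕ²` started at `(0,0)` whose two-step increments of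
`x − y` lie in `{−2, 0, 2}` and satisfy a uniform conditional drift bound
`E[(x_{2k} − y_{2k}) − (x_{2k−2} − y_{2k−2}) ∣ X_{2k−2} = s] ≥ δ > 0` for every possible
value `s` of `X_{2k−2}`. Then `P(x_{2k} = y_{2k})` decays exponentially in `k`, and
consequently `∑_{k≥1} P(X_{2k} = (0,0)) < ∞`. -/
theorem exp_decay_and_transient_of_two_step_drift
    {Ω : Type*} [MeasurableSpace Ω] (μ : Measure Ω) [IsProbabilityMeasure μ]
    (X : ℕ → Ω → ℕ × ℕ) (hXmeas : ∀ n, Measurable (X n))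
    (hstart : ∀ᵐ ω ∂μ, X 0 ω = (0, 0))
    (K : ℕ × ℕ → ℕ × ℕ → ENNReal) (hrow : ∀ s, ∑' t, K s t = 1)
    (hMarkov : ∀ (n : ℕ) (f : ℕ → ℕ × ℕ) (t : ℕ × ℕ),
      μ ({ω | X (n + 1) ω = t} ∩ ⋂ i ∈ Finset.range (n + 1), {ω | X i ω = f i})
        = K (f n) t * μ (⋂ i ∈ Finset.range (n + 1), {ω | X i ω = f i}))
    (d : ℕ → Ω → ℤ)
    (hd : ∀ k ω, d k ω = ((X (2 * k) ω).1 : ℤ) - ((X (2 * k) ω).2 : ℤ))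
    (hincr : ∀ k : ℕ, ∀ᵐ ω ∂μ, d (k + 1) ω - d k ω ∈ ({-2, 0, 2} : Set ℤ))
    (δ : ℝ) (hδ : 0 < δ)
    (hdrift : ∀ (k : ℕ) (s : ℕ × ℕ), μ {ω | X (2 * k) ω = s} ≠ 0 →
      δ * (μ {ω | X (2 * k) ω = s}).toReal ≤
        ∫ ω in {ω | X (2 * k) ω = s}, ((d (k + 1) ω - d k ω : ℤ) : ℝ) ∂μ) :
    (∃ C > (0 : ℝ), ∃ c > (0 : ℝ), ∀ k : ℕ,
        (μ {ω | (X (2 * k) ω).1 = (X (2 * k) ω).2}).toReal ≤ C * Real.exp (-c * k)) ∧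
      ∑' k : ℕ, μ {ω | X (2 * (k + 1)) ω = (0, 0)} < ⊤ := by
  classical
  -- parameters
  set δ' : ℝ := min δ 1 with hδ'def
  have hδ'0 : 0 < δ' := lt_min hδ one_pos
  have hδ'1 : δ' ≤ 1 := min_le_right _ _
  have hδ'δ : δ' ≤ δ := min_le_left _ _
  set t : ℝ := Real.arsinh (δ' / 4) with ht_def
  have hsinh : Real.sinh t = δ' / 4 := Real.sinh_arsinh _
  have ht0 : 0 < t := Real.arsinh_pos_iff.mpr (by linarith)
  set ρ : ℝ := Real.cosh (2 * t) - δ' / 2 * Real.sinh (2 * t) with hρ_def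
  have hcosh1 : (1 : ℝ) ≤ Real.cosh t := Real.one_le_cosh t
  have hcosh_sq : Real.cosh t ^ 2 = Real.sinh t ^ 2 + 1 := Real.cosh_sq t
  have hc2 : Real.cosh (2 * t) = 2 * Real.sinh t ^ 2 + 1 := by
    rw [Real.cosh_two_mul]; nlinarith
  have hs2 : Real.sinh (2 * t) = 2 * Real.sinh t * Real.cosh t := Real.sinh_two_mul t
  have hcosh_le : Real.cosh t ≤ 1 + Real.sinh t := by
    nlinarith [Real.cosh_pos t, hsinh]
  have hρ1 : ρ < 1 := by
    rw [hρ_def, hc2, hs2, hsinh]; nlinarith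
  have hρ0 : 0 < ρ := by
    rw [hρ_def, hc2, hs2, hsinh]; nlinarith
  have hs2nonneg : 0 ≤ Real.sinh (2 * t) := by
    rw [hs2]; positivity
  -- pointwise exponential bound
  have hpt : ∀ z : ℤ, z ∈ ({-2, 0, 2} : Set ℤ) →
      Real.exp (-t * (z : ℝ)) ≤ Real.cosh (2 * t) - (z : ℝ) / 2 * Real.sinh (2 * t) := by
    intro z hz
    rcases hz with h | h | h
    · subst h
      have : -t * ((-2 : ℤ) : ℝ) = 2 * t := by push_cast; ring
      rw [this]
      have : ((-2 : ℤ) : ℝ) / 2 = -1 := by norm_num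
      rw [this, ← Real.cosh_add_sinh (2 * t)]; ring_nf; exact le_refl _
    · subst h
      simp only [Int.cast_zero, mul_zero, Real.exp_zero, zero_div, zero_mul, sub_zero]
      exact Real.one_le_cosh _
    · simp only [Set.mem_singleton_iff] at h; subst h
      have h1 : -t * ((2 : ℤ) : ℝ) = -(2 * t) := by push_cast; ring
      have h2 : ((2 : ℤ) : ℝ) / 2 = 1 := by norm_num
      rw [h1, h2, ← Real.cosh_sub_sinh (2 * t)]; ring_nf; exact le_refl _
  -- measurability
  have hdm : ∀ k, Measurable (d k) := by
    intro k
    have : d k = (fun p : ℕ × ℕ => ((p.1 : ℤ) - (p.2 : ℤ))) ∘ X (2 * k) :=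
      funext fun ω => hd k ω
    rw [this]
    exact (measurable_of_countable _).comp (hXmeas _)
  set Y : ℕ → Ω → ℝ := fun k ω => Real.exp (-t * ((d k ω : ℤ) : ℝ)) with hY_def
  have hYm : ∀ k, Measurable (Y k) := by
    intro k
    exact (Real.measurable_exp.comp ((measurable_of_countable
      (fun z : ℤ => -t * (z : ℝ))).comp (hdm k)))
  have hYpos : ∀ k ω, 0 < Y k ω := fun k ω => Real.exp_pos _
  -- a.e. bound on d
  have hbd : ∀ k, ∀ᵐ ω ∂μ, |((d k ω : ℤ) : ℝ)| ≤ 2 * k := by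
    intro k
    induction k with
    | zero =>
      filter_upwards [hstart] with ω hω
      rw [hd 0 ω, hω]; norm_num
    | succ n ih =>
      filter_upwards [ih, hincr n] with ω h1 h2
      have h3 : |((d (n + 1) ω - d n ω : ℤ) : ℝ)| ≤ 2 := by
        rcases h2 with h | h | h <;> rw [h] <;> norm_num
      have : ((d (n+1) ω : ℤ) : ℝ) = ((d n ω : ℤ) : ℝ) + ((d (n+1) ω - d n ω : ℤ) : ℝ) := by
        push_cast; ring
      rw [this]
      calc |((d n ω : ℤ) : ℝ) + ((d (n+1) ω - d n ω : ℤ) : ℝ)|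
          ≤ |((d n ω : ℤ) : ℝ)| + |((d (n+1) ω - d n ω : ℤ) : ℝ)| := abs_add_le _ _
        _ ≤ 2 * n + 2 := add_le_add h1 h3
        _ = 2 * (n + 1 : ℕ) := by push_cast; ring
  -- integrability of Y k
  have hYint : ∀ k, Integrable (Y k) μ := by
    intro k
    refine Integrable.mono' (integrable_const (Real.exp (t * (2 * k)))) ((hYm k).aestronglyMeasurable) ?_
    filter_upwards [hbd k] with ω hω
    rw [Real.norm_eq_abs, abs_of_pos (hYpos k ω)]
    apply Real.exp_le_exp.mpr
    have h1 : -t * ((d k ω : ℤ) : ℝ) ≤ t * |((d k ω : ℤ) : ℝ)| := by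
      have := mul_le_mul_of_nonneg_left (neg_le_abs ((d k ω : ℤ) : ℝ)) ht0.le
      linarith
    have h2 := mul_le_mul_of_nonneg_left hω ht0.le
    linarith
  -- increment integrand
  set W : ℕ → Ω → ℝ := fun k ω => ((d (k + 1) ω - d k ω : ℤ) : ℝ) with hW_def
  have hWm : ∀ k, Measurable (W k) := by
    intro k
    exact (measurable_of_countable (fun z : ℤ => (z : ℝ))).comp ((hdm (k+1)).sub (hdm k))
  have hWbd : ∀ k, ∀ᵐ ω ∂μ, |W k ω| ≤ 2 := by
    intro k
    filter_upwards [hincr k] with ω h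
    show |((d (k + 1) ω - d k ω : ℤ) : ℝ)| ≤ 2
    rcases h with h | h | h <;> rw [h] <;> norm_num
  have hWint : ∀ k, Integrable (W k) μ := by
    intro k
    refine Integrable.mono' (integrable_const 2) ((hWm k).aestronglyMeasurable) ?_
    filter_upwards [hWbd k] with ω hω
    rwa [Real.norm_eq_abs]
  set E : ℕ → Ω → ℝ := fun k ω => Real.exp (-t * W k ω) with hE_def
  have hEm : ∀ k, Measurable (E k) := fun k =>
    Real.measurable_exp.comp ((measurable_const.mul (hWm k)))
  have hEbd : ∀ k, ∀ᵐ ω ∂μ, E k ω ≤ Real.cosh (2 * t) - W k ω / 2 * Real.sinh (2 * t) := by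
    intro k
    filter_upwards [hincr k] with ω h
    exact hpt _ h
  have hEint : ∀ k, Integrable (E k) μ := by
    intro k
    refine Integrable.mono' (integrable_const (Real.exp (2 * t))) ((hEm k).aestronglyMeasurable) ?_
    filter_upwards [hWbd k] with ω hω
    rw [Real.norm_eq_abs, abs_of_pos (Real.exp_pos _)]
    apply Real.exp_le_exp.mpr
    have h1 := mul_le_mul_of_nonneg_left (neg_le_abs (W k ω)) ht0.le
    have h2 := mul_le_mul_of_nonneg_left hω ht0.le
    linarith
  -- Y (k+1) = Y k * E k
  have hYsplit : ∀ k ω, Y (k + 1) ω = Y k ω * E k ω := by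
    intro k ω
    simp only [hY_def, hE_def, hW_def]
    rw [← Real.exp_add]
    congr 1
    push_cast
    ring
  -- partition events
  set A : ℕ → ℕ × ℕ → Set Ω := fun k s => {ω | X (2 * k) ω = s} with hA_def
  have hAmeas : ∀ k s, MeasurableSet (A k s) := by
    intro k s
    exact hXmeas (2 * k) (measurableSet_singleton s)
  have hAdisj : ∀ k, Pairwise (Function.onFun Disjoint (A k)) := by
    intro k s1 s2 hne
    apply Set.disjoint_left.mpr
    intro ω h1 h2
    exact hne (h1.symm.trans h2)
  have hAunion : ∀ k, (⋃ s, A k s) = Set.univ := by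
    intro k
    ext ω
    simp only [Set.mem_iUnion, Set.mem_univ, iff_true]
    exact ⟨X (2 * k) ω, rfl⟩
  -- constant value of Y k on A k s
  have hYconst : ∀ k s, ∀ ω ∈ A k s, Y k ω = Real.exp (-t * ((s.1 : ℤ) - (s.2 : ℤ) : ℤ)) := by
    intro k s ω hω
    have hω' : X (2 * k) ω = s := hω
    simp only [hY_def]
    rw [hd k ω, hω']
  -- decomposition of integrals
  have hdecomp : ∀ (k : ℕ) (f : Ω → ℝ), Integrable f μ →
      HasSum (fun s => ∫ ω in A k s, f ω ∂μ) (∫ ω, f ω ∂μ) := by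
    intro k f hf
    have := MeasureTheory.hasSum_integral_iUnion (μ := μ) (f := f) (hAmeas k) (hAdisj k)
      (by rw [hAunion k]; exact hf.integrableOn)
    rwa [hAunion k, setIntegral_univ] at this
  -- per-state bound
  have hstate : ∀ k s, ∫ ω in A k s, Y (k + 1) ω ∂μ ≤ ρ * ∫ ω in A k s, Y k ω ∂μ := by
    intro k s
    by_cases hμs : μ (A k s) = 0
    · rw [Measure.restrict_eq_zero.mpr hμs]
      simp
    · set c : ℝ := Real.exp (-t * ((s.1 : ℤ) - (s.2 : ℤ) : ℤ)) with hc_def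
      have hc0 : 0 < c := Real.exp_pos _
      have hYkint : ∫ ω in A k s, Y k ω ∂μ = c * (μ (A k s)).toReal := by
        rw [setIntegral_congr_fun (hAmeas k s) (fun ω hω => hYconst k s ω hω),
          setIntegral_const]
        rw [smul_eq_mul, measureReal_def]; ring
      have hY1 : ∫ ω in A k s, Y (k + 1) ω ∂μ = c * ∫ ω in A k s, E k ω ∂μ := by
        rw [← integral_const_mul]
        apply setIntegral_congr_fun (hAmeas k s)
        intro ω hω
        rw [hYsplit k ω, hYconst k s ω hω]
      have hEbound : ∫ ω in A k s, E k ω ∂μ ≤ ρ * (μ (A k s)).toReal := by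
        have h1 : ∫ ω in A k s, E k ω ∂μ ≤
            ∫ ω in A k s, (Real.cosh (2 * t) - W k ω / 2 * Real.sinh (2 * t)) ∂μ := by
          apply integral_mono_ae ((hEint k).integrableOn)
          · exact ((integrable_const (Real.cosh (2*t))).sub
              (((hWint k).div_const 2).mul_const (Real.sinh (2*t)))).integrableOn
          · exact ae_restrict_of_ae (hEbd k)
        have h2 : ∫ ω in A k s, (Real.cosh (2 * t) - W k ω / 2 * Real.sinh (2 * t)) ∂μ
            = Real.cosh (2 * t) * (μ (A k s)).toReal
              - Real.sinh (2 * t) / 2 * ∫ ω in A k s, W k ω ∂μ := by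
          rw [integral_sub ((integrable_const _).integrableOn)
            ((((hWint k).div_const 2).mul_const (Real.sinh (2*t))).integrableOn)]
          rw [setIntegral_const, smul_eq_mul]
          congr 1
          · rw [measureReal_def]; ring
          · rw [← integral_const_mul]
            congr 1
            ext ω
            ring
        have h3 : δ' * (μ (A k s)).toReal ≤ ∫ ω in A k s, W k ω ∂μ := by
          have := hdrift k s hμs
          have hnn : 0 ≤ (μ (A k s)).toReal := ENNReal.toReal_nonneg
          calc δ' * (μ (A k s)).toReal ≤ δ * (μ (A k s)).toReal := by nlinarith
            _ ≤ _ := this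
        calc ∫ ω in A k s, E k ω ∂μ
            ≤ Real.cosh (2 * t) * (μ (A k s)).toReal
              - Real.sinh (2 * t) / 2 * ∫ ω in A k s, W k ω ∂μ := h1.trans (le_of_eq h2)
          _ ≤ Real.cosh (2 * t) * (μ (A k s)).toReal
              - Real.sinh (2 * t) / 2 * (δ' * (μ (A k s)).toReal) := by
              have : Real.sinh (2*t) / 2 * (δ' * (μ (A k s)).toReal)
                  ≤ Real.sinh (2*t) / 2 * ∫ ω in A k s, W k ω ∂μ := by
                apply mul_le_mul_of_nonneg_left h3 (by linarith)
              linarith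
          _ = ρ * (μ (A k s)).toReal := by rw [hρ_def]; ring
      rw [hY1, hYkint]
      calc c * ∫ ω in A k s, E k ω ∂μ ≤ c * (ρ * (μ (A k s)).toReal) :=
            mul_le_mul_of_nonneg_left hEbound hc0.le
        _ = ρ * (c * (μ (A k s)).toReal) := by ring
  -- recursion
  have hrec : ∀ k, ∫ ω, Y (k + 1) ω ∂μ ≤ ρ * ∫ ω, Y k ω ∂μ := by
    intro k
    have hS1 := hdecomp k (Y (k + 1)) (hYint (k + 1))
    have hS2 := hdecomp k (Y k) (hYint k)
    rw [← hS1.tsum_eq]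
    have : ρ * ∫ ω, Y k ω ∂μ = ∑' s, ρ * ∫ ω in A k s, Y k ω ∂μ := by
      rw [← (hS2.mul_left ρ).tsum_eq]
    rw [this]
    exact Summable.tsum_le_tsum (fun s => hstate k s) hS1.summable (hS2.mul_left ρ).summable
  have hY0 : ∫ ω, Y 0 ω ∂μ = 1 := by
    have : Y 0 =ᵐ[μ] fun _ => (1 : ℝ) := by
      filter_upwards [hstart] with ω hω
      rw [hY_def]
      simp only
      rw [hd 0 ω, hω]
      norm_num
    rw [integral_congr_ae this]
    simp
  have hYbound : ∀ k, ∫ ω, Y k ω ∂μ ≤ ρ ^ k := by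
    intro k
    induction k with
    | zero => rw [hY0]; simp
    | succ n ih =>
      calc ∫ ω, Y (n + 1) ω ∂μ ≤ ρ * ∫ ω, Y n ω ∂μ := hrec n
        _ ≤ ρ * ρ ^ n := mul_le_mul_of_nonneg_left ih hρ0.le
        _ = ρ ^ (n + 1) := by ring
  -- probability of equality bound
  have hPeq : ∀ k, (μ {ω | (X (2 * k) ω).1 = (X (2 * k) ω).2}).toReal ≤ ρ ^ k := by
    intro k
    set B : Set Ω := {ω | (X (2 * k) ω).1 = (X (2 * k) ω).2} with hB_def
    have hBmeas : MeasurableSet B :=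
      hXmeas (2 * k) ((Set.to_countable {p : ℕ × ℕ | p.1 = p.2}).measurableSet)
    have h1 : ∫ ω in B, (1 : ℝ) ∂μ ≤ ∫ ω in B, Y k ω ∂μ := by
      apply setIntegral_mono_on (integrableOn_const (measure_ne_top μ B))
        ((hYint k).integrableOn) hBmeas
      intro ω hω
      have heq : (X (2 * k) ω).1 = (X (2 * k) ω).2 := hω
      have hz : d k ω = 0 := by rw [hd k ω, heq]; ring
      simp only [hY_def, hz]
      norm_num
    have h2 : ∫ ω in B, Y k ω ∂μ ≤ ∫ ω, Y k ω ∂μ :=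
      setIntegral_le_integral (hYint k) (Filter.Eventually.of_forall fun ω => (hYpos k ω).le)
    have h3 : ∫ ω in B, (1 : ℝ) ∂μ = (μ B).toReal := by
      rw [setIntegral_const, smul_eq_mul, mul_one, measureReal_def]
    calc (μ B).toReal = ∫ ω in B, (1 : ℝ) ∂μ := h3.symm
      _ ≤ ∫ ω, Y k ω ∂μ := h1.trans h2
      _ ≤ ρ ^ k := hYbound k
  constructor
  · refine ⟨1, one_pos, -Real.log ρ, neg_pos.mpr (Real.log_neg hρ0 hρ1), ?_⟩
    intro k
    have e1 : -(-Real.log ρ) * (k : ℝ) = (k : ℝ) * Real.log ρ := by ring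
    rw [one_mul, e1, Real.exp_nat_mul, Real.exp_log hρ0]
    exact hPeq k
  · set r : ENNReal := ENNReal.ofReal ρ with hr_def
    have hr1 : r < 1 := ENNReal.ofReal_lt_one.mpr hρ1
    have hterm : ∀ k : ℕ, μ {ω | X (2 * (k + 1)) ω = (0, 0)} ≤ r ^ (k + 1) := by
      intro k
      have hsub : {ω | X (2 * (k + 1)) ω = (0, 0)} ⊆
          {ω | (X (2 * (k + 1)) ω).1 = (X (2 * (k + 1)) ω).2} := by
        intro ω h
        have h' : X (2 * (k + 1)) ω = (0, 0) := h
        show (X (2 * (k + 1)) ω).1 = (X (2 * (k + 1)) ω).2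
        rw [h']
      calc μ {ω | X (2 * (k + 1)) ω = (0, 0)}
          ≤ μ {ω | (X (2 * (k + 1)) ω).1 = (X (2 * (k + 1)) ω).2} := measure_mono hsub
        _ = ENNReal.ofReal (μ {ω | (X (2 * (k + 1)) ω).1 = (X (2 * (k + 1)) ω).2}).toReal :=
            (ENNReal.ofReal_toReal (measure_ne_top μ _)).symm
        _ ≤ ENNReal.ofReal (ρ ^ (k + 1)) := ENNReal.ofReal_le_ofReal (hPeq (k + 1))
        _ = r ^ (k + 1) := ENNReal.ofReal_pow hρ0.le _
    calc ∑' k : ℕ, μ {ω | X (2 * (k + 1)) ω = (0, 0)}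
        ≤ ∑' k : ℕ, r ^ (k + 1) := ENNReal.tsum_le_tsum hterm
      _ ≤ ∑' k : ℕ, r ^ k := by
          apply ENNReal.tsum_le_tsum
          intro k
          calc r ^ (k + 1) = r ^ k * r := pow_succ r k
            _ ≤ r ^ k * 1 := mul_le_mul_right hr1.le _
            _ = r ^ k := mul_one _
      _ = (1 - r)⁻¹ := ENNReal.tsum_geometric r
      _ < ⊤ := ENNReal.inv_lt_top.mpr (tsub_pos_of_lt hr1)
end

section
/- Let S = {s₁,…,s_m} ⊆ ℤⁿ be symmetric (closed under negation), let A be the probability simplex on m coordinates, and let R = {a ∈ A : dim(span_ℝ({sᵢ : aᵢ > 0})) ≤ 2 and ∑ᵢ aᵢ sᵢ = 0}. If R is nonempty, then R is path-connected. -/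
open Submodule Module

section Aux

variable (n m : ℕ) (s : Fin m → Fin n → ℤ)

/-- The recurrent set. -/
private def RSet : Set (Fin m → ℝ) :=
  {a : Fin m → ℝ |
      ((∀ i, 0 ≤ a i) ∧ ∑ i, a i = 1) ∧
      Module.finrank ℝ
        ↥(Submodule.span ℝ ((fun i => fun j => (s i j : ℝ)) '' {i | 0 < a i})) ≤ 2 ∧
      (∑ i, a i • (fun j => (s i j : ℝ))) = 0}

variable {n m s}

private theorem seg_sub (x y : Fin m → ℝ)
    (hx0 : ∀ i, 0 ≤ x i) (hx1 : ∑ i, x i = 1)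
    (hy0 : ∀ i, 0 ≤ y i) (hy1 : ∑ i, y i = 1)
    (hxd : (∑ i, x i • (fun j => (s i j : ℝ))) = 0)
    (hyd : (∑ i, y i • (fun j => (s i j : ℝ))) = 0)
    (p : Submodule ℝ (Fin n → ℝ)) (hp : Module.finrank ℝ p ≤ 2)
    (hmem : ∀ k, (0 < x k ∨ 0 < y k) → (fun j => (s k j : ℝ)) ∈ p) :
    segment ℝ x y ⊆ RSet n m s := by
  rintro z ⟨u, v, hu, hv, huv, rfl⟩
  have hz : ∀ k, (u • x + v • y) k = u * x k + v * y k := fun k => rfl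
  refine ⟨⟨fun i => by
      have := mul_nonneg hu (hx0 i); have := mul_nonneg hv (hy0 i)
      simp only [hz]; linarith, ?_⟩, ?_, ?_⟩
  · simp only [hz]
    rw [Finset.sum_add_distrib, ← Finset.mul_sum, ← Finset.mul_sum, hx1, hy1]
    linarith
  · refine le_trans (Submodule.finrank_mono ?_) hp
    rw [Submodule.span_le]
    rintro w ⟨k, hk, rfl⟩
    apply hmem
    by_contra hc
    push_neg at hc
    have hx' : x k = 0 := le_antisymm hc.1 (hx0 k)
    have hy' : y k = 0 := le_antisymm hc.2 (hy0 k)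
    have h0 : (u • x + v • y) k = 0 := by simp [hz, hx', hy']
    have hk' : 0 < (u • x + v • y) k := hk
    rw [h0] at hk'
    exact lt_irrefl 0 hk'
  · have : ∀ k : Fin m, (u • x + v • y) k • (fun j => (s k j : ℝ)) =
        u • (x k • (fun j => (s k j : ℝ))) + v • (y k • (fun j => (s k j : ℝ))) := by
      intro k; simp [hz, add_smul, smul_smul]
    rw [Finset.sum_congr rfl (fun k _ => this k), Finset.sum_add_distrib,
      ← Finset.smul_sum, ← Finset.smul_sum, hxd, hyd]
    simp

private theorem joined_of_seg {x y : Fin m → ℝ} (hxy : segment ℝ x y ⊆ RSet n m s) :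
    JoinedIn (RSet n m s) x y := by
  have h := (convex_segment x y).isPathConnected ⟨x, left_mem_segment ℝ x y⟩
  exact (h.joinedIn x (left_mem_segment ℝ x y) y (right_mem_segment ℝ x y)).mono hxy

/-- The symmetric two-point measure on `{i, j}`. -/
private noncomputable def B (i j : Fin m) : Fin m → ℝ :=
  fun k => 2⁻¹ * ((Pi.single i (1 : ℝ) : Fin m → ℝ) k + (Pi.single j (1 : ℝ) : Fin m → ℝ) k)

private theorem B_nonneg (i j k : Fin m) : 0 ≤ B i j k := by
  unfold B
  have h1 : (0:ℝ) ≤ (Pi.single i (1:ℝ) : Fin m → ℝ) k := by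
    rw [Pi.single_apply]; split <;> norm_num
  have h2 : (0:ℝ) ≤ (Pi.single j (1:ℝ) : Fin m → ℝ) k := by
    rw [Pi.single_apply]; split <;> norm_num
  positivity

private theorem B_sum (i j : Fin m) : ∑ k, B i j k = 1 := by
  unfold B
  rw [← Finset.mul_sum, Finset.sum_add_distrib]
  simp only [Pi.single_apply]
  norm_num [Finset.sum_ite_eq']

private theorem B_supp {i j k : Fin m} (h : 0 < B i j k) : k = i ∨ k = j := by
  by_contra hc
  push_neg at hc
  have : B i j k = 0 := by
    unfold B; rw [Pi.single_apply, Pi.single_apply, if_neg hc.1, if_neg hc.2]; ring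
  rw [this] at h; exact lt_irrefl 0 h

private theorem B_drift {i j : Fin m} (hj : s j = -s i) :
    (∑ k, B i j k • (fun l => (s k l : ℝ))) = 0 := by
  have hsum : ∀ i' : Fin m, (∑ k, ((Pi.single i' (1:ℝ) : Fin m → ℝ) k) • (fun l => (s k l : ℝ)))
      = fun l => (s i' l : ℝ) := by
    intro i'
    rw [Finset.sum_eq_single i']
    · simp
    · intro b _ hb; rw [Pi.single_apply, if_neg hb]; simp
    · intro h; exact absurd (Finset.mem_univ i') h
  have : ∀ k : Fin m, B i j k • (fun l => (s k l : ℝ)) =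
      (2⁻¹ : ℝ) • (((Pi.single i (1:ℝ) : Fin m → ℝ) k) • (fun l => (s k l : ℝ))
        + ((Pi.single j (1:ℝ) : Fin m → ℝ) k) • (fun l => (s k l : ℝ))) := by
    intro k; unfold B; rw [mul_add, add_smul, smul_add, smul_smul, smul_smul]
  rw [Finset.sum_congr rfl (fun k _ => this k), ← Finset.smul_sum,
    Finset.sum_add_distrib, hsum i, hsum j]
  have : (fun l => (s j l : ℝ)) = -(fun l => (s i l : ℝ)) := by
    funext l; rw [hj]; simp
  rw [this]
  simp

private theorem finrank_span_pair (x y : Fin n → ℝ) :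
    Module.finrank ℝ ↥(Submodule.span ℝ ({x, y} : Set (Fin n → ℝ))) ≤ 2 := by
  classical
  refine le_trans (finrank_span_le_card _) ?_
  rw [Set.toFinset_insert, Set.toFinset_singleton]
  exact le_trans (Finset.card_insert_le _ _) (by simp)

/-- Every `a ∈ R` is joined in `R` to some symmetric two-point measure. -/
private theorem joined_to_B (hsymm : ∀ i : Fin m, ∃ j : Fin m, s j = -s i)
    {a : Fin m → ℝ} (ha : a ∈ RSet n m s) :
    ∃ i j : Fin m, s j = -s i ∧ JoinedIn (RSet n m s) a (B i j) := by
  obtain ⟨⟨ha0, ha1⟩, hrank, hdrift⟩ := ha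
  have : ∃ i, 0 < a i := by
    by_contra hc
    push_neg at hc
    have : ∀ i, a i = 0 := fun i => le_antisymm (hc i) (ha0 i)
    rw [Finset.sum_congr rfl (fun i _ => this i)] at ha1
    simp at ha1
  obtain ⟨i, hi⟩ := this
  obtain ⟨j, hj⟩ := hsymm i
  refine ⟨i, j, hj, joined_of_seg (seg_sub a (B i j) ha0 ha1 (B_nonneg i j) (B_sum i j)
    hdrift (B_drift hj) _ hrank ?_)⟩
  intro k hk
  have hSi : (fun l => (s i l : ℝ)) ∈
      Submodule.span ℝ ((fun i => fun j => (s i j : ℝ)) '' {i | 0 < a i}) :=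
    Submodule.subset_span ⟨i, hi, rfl⟩
  rcases hk with hk | hk
  · exact Submodule.subset_span ⟨k, hk, rfl⟩
  · rcases B_supp hk with rfl | rfl
    · exact hSi
    · have hne : (fun l => (s k l : ℝ)) = -(fun l => (s i l : ℝ)) := by
        funext l; rw [hj]; simp
      rw [hne]
      exact Submodule.neg_mem _ hSi

/-- Two symmetric two-point measures are joined in `R`. -/
private theorem joined_B_B {i j i' j' : Fin m} (hj : s j = -s i) (hj' : s j' = -s i') :
    JoinedIn (RSet n m s) (B i j) (B i' j') := by
  refine joined_of_seg (seg_sub (B i j) (B i' j') (B_nonneg i j) (B_sum i j)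
    (B_nonneg i' j') (B_sum i' j') (B_drift hj) (B_drift hj')
    (Submodule.span ℝ ({fun l => (s i l : ℝ), fun l => (s i' l : ℝ)} : Set (Fin n → ℝ)))
    (finrank_span_pair _ _) ?_)
  have hnegi : (fun l => (s j l : ℝ)) = -(fun l => (s i l : ℝ)) := by
    funext l; rw [hj]; simp
  have hnegi' : (fun l => (s j' l : ℝ)) = -(fun l => (s i' l : ℝ)) := by
    funext l; rw [hj']; simp
  have h1 : (fun l => (s i l : ℝ)) ∈
      Submodule.span ℝ ({fun l => (s i l : ℝ), fun l => (s i' l : ℝ)} : Set (Fin n → ℝ)) :=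
    Submodule.subset_span (Set.mem_insert _ _)
  have h2 : (fun l => (s i' l : ℝ)) ∈
      Submodule.span ℝ ({fun l => (s i l : ℝ), fun l => (s i' l : ℝ)} : Set (Fin n → ℝ)) :=
    Submodule.subset_span (Set.mem_insert_of_mem _ rfl)
  intro k hk
  rcases hk with hk | hk
  · rcases B_supp hk with rfl | rfl
    · exact h1
    · rw [hnegi]; exact Submodule.neg_mem _ h1
  · rcases B_supp hk with rfl | rfl
    · exact h2
    · rw [hnegi']; exact Submodule.neg_mem _ h2

end Aux

/-- Let `S = {s₁, …, s_m} ⊆ ℤⁿ` be symmetric (closed under negation), `A` the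
probability simplex on `m` coordinates, and
`R = {a ∈ A : dim span_ℝ({sᵢ : aᵢ > 0}) ≤ 2 and ∑ aᵢ sᵢ = 0}`. If `R` is nonempty,
then `R` is path-connected. -/
theorem recurrentSet_isPathConnected (n m : ℕ) (s : Fin m → Fin n → ℤ)
    (hsymm : ∀ i : Fin m, ∃ j : Fin m, s j = -s i) :
    ({a : Fin m → ℝ |
      ((∀ i, 0 ≤ a i) ∧ ∑ i, a i = 1) ∧
      Module.finrank ℝ
        ↥(Submodule.span ℝ ((fun i => fun j => (s i j : ℝ)) '' {i | 0 < a i})) ≤ 2 ∧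
      (∑ i, a i • (fun j => (s i j : ℝ))) = 0} : Set (Fin m → ℝ)).Nonempty →
    IsPathConnected {a : Fin m → ℝ |
      ((∀ i, 0 ≤ a i) ∧ ∑ i, a i = 1) ∧
      Module.finrank ℝ
        ↥(Submodule.span ℝ ((fun i => fun j => (s i j : ℝ)) '' {i | 0 < a i})) ≤ 2 ∧
      (∑ i, a i • (fun j => (s i j : ℝ))) = 0} := by
  rintro ⟨a₀, ha₀⟩
  have ha₀' : a₀ ∈ RSet n m s := ha₀
  refine ⟨a₀, ha₀', ?_⟩
  intro b hb
  have hb' : b ∈ RSet n m s := hb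
  obtain ⟨i, j, hj, hJa⟩ := joined_to_B hsymm ha₀'
  obtain ⟨i', j', hj', hJb⟩ := joined_to_B hsymm hb'
  exact (hJa.trans (joined_B_B hj hj')).trans hJb.symm
end

section
/- Let G = ℤⁿ × H with H a finite abelian group, π: G → ℤⁿ the projection, and X a homogeneous random walk on G with step distribution supported on a finite set S, started at 0. If the projected walk π(X) on ℤⁿ returns to 0 infinitely often almost surely, and there exist K ∈ ℕ and δ > 0 such that whenever π(X_t) = 0, the conditional probability that X_{t+k} = 0 for some 0 ≤ k ≤ K is at least δ, then X returns to 0 infinitely often almost surely. -/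
open MeasureTheory ProbabilityTheory

set_option linter.unusedSectionVars false

section Aux

variable {Ω : Type*} [MeasurableSpace Ω] {α : Type*}

lemma factor_preimage (f : Ω → α) (B : Set Ω)
    (h : ∀ ω ω', f ω = f ω' → ω ∈ B → ω' ∈ B) : B = f ⁻¹' (f '' B) := by
  ext ω
  constructor
  · exact fun hω => ⟨ω, hω, rfl⟩
  · rintro ⟨ω', hω', hf⟩
    exact h ω' ω hf hω'

variable {G : Type*} [MeasurableSpace G] [Countable G] [MeasurableSingletonClass G]

lemma block_indep (μ : Measure Ω) (ξ : ℕ → Ω → G) (hmeas : ∀ i, Measurable (ξ i))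
    (hindep : iIndepFun ξ μ) (t L : ℕ) (B W : Set Ω)
    (hB : ∀ ω ω', (∀ i, i < t → ξ i ω = ξ i ω') → ω ∈ B → ω' ∈ B)
    (hW : ∀ ω ω', (∀ i, t ≤ i → i < t + L → ξ i ω = ξ i ω') → ω ∈ W → ω' ∈ W) :
    μ (B ∩ W) = μ B * μ W := by
  classical
  have hdisj : Disjoint (Finset.range t) (Finset.Ico t (t + L)) := by
    simp only [Finset.disjoint_left, Finset.mem_range, Finset.mem_Ico]
    omega
  have h := hindep.indepFun_finset (Finset.range t) (Finset.Ico t (t + L)) hdisj hmeas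
  set Y₁ : Ω → ((i : (Finset.range t : Finset ℕ)) → G) := fun a i => ξ i a with hY₁
  set Y₂ : Ω → ((i : (Finset.Ico t (t + L) : Finset ℕ)) → G) := fun a i => ξ i a with hY₂
  have hB' : B = Y₁ ⁻¹' (Y₁ '' B) := by
    refine factor_preimage Y₁ B fun ω ω' hf hω => hB ω ω' (fun i hi => ?_) hω
    exact congrFun hf ⟨i, Finset.mem_range.2 hi⟩
  have hW' : W = Y₂ ⁻¹' (Y₂ '' W) := by
    refine factor_preimage Y₂ W fun ω ω' hf hω => hW ω ω' (fun i hi1 hi2 => ?_) hω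
    exact congrFun hf ⟨i, Finset.mem_Ico.2 ⟨hi1, hi2⟩⟩
  rw [hB', hW']
  exact h.measure_inter_preimage_eq_mul _ _ (Set.to_countable _).measurableSet
    (Set.to_countable _).measurableSet

/-- `Dset X p K m j t` : `t` is the `j`-th recorded time `≥ m` at which `p (X t ω)` holds,
where recorded times are selected greedily with gaps `> K`. -/
def Dset (X : ℕ → Ω → G) (p : G → Prop) (K m : ℕ) : ℕ → ℕ → Set Ω
  | 0, t => {ω | m ≤ t ∧ p (X t ω) ∧ ∀ u, m ≤ u → u < t → ¬ p (X u ω)}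
  | j+1, t => ⋃ s : ℕ, {ω | ω ∈ Dset X p K m j s ∧ s + K < t ∧ p (X t ω) ∧
      ∀ u, s + K < u → u < t → ¬ p (X u ω)}

variable {X : ℕ → Ω → G} {p : G → Prop} {K m : ℕ}

lemma Dset_prop {j t : ℕ} {ω : Ω} (h : ω ∈ Dset X p K m j t) : m ≤ t ∧ p (X t ω) := by
  induction j generalizing t with
  | zero => exact ⟨h.1, h.2.1⟩
  | succ j ih =>
    obtain ⟨s, hs⟩ := Set.mem_iUnion.1 h
    have h1 := (ih hs.1).1
    have h2 := hs.2.1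
    exact ⟨by omega, hs.2.2.1⟩

lemma Dset_unique {j t t' : ℕ} {ω : Ω} (h : ω ∈ Dset X p K m j t)
    (h' : ω ∈ Dset X p K m j t') : t = t' := by
  induction j generalizing t t' with
  | zero =>
    by_contra hne
    rcases Nat.lt_or_ge t t' with hlt | hge
    · exact h'.2.2 t h.1 hlt h.2.1
    · exact h.2.2 t' h'.1 (by omega) h'.2.1
  | succ j ih =>
    obtain ⟨s, hs⟩ := Set.mem_iUnion.1 h
    obtain ⟨s', hs'⟩ := Set.mem_iUnion.1 h'
    have hss : s = s' := ih hs.1 hs'.1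
    subst hss
    by_contra hne
    rcases Nat.lt_or_ge t t' with hlt | hge
    · exact hs'.2.2.2 t hs.2.1 hlt hs.2.2.1
    · exact hs.2.2.2 t' hs'.2.1 (by omega) hs'.2.2.1

lemma Dset_exists {ω : Ω} (hinf : {t : ℕ | p (X t ω)}.Infinite) (j : ℕ) :
    ∃ t, ω ∈ Dset X p K m j t := by
  classical
  induction j with
  | zero =>
    have : ∃ t, m ≤ t ∧ p (X t ω) := by
      obtain ⟨t, ht, htm⟩ := hinf.exists_gt m
      exact ⟨t, le_of_lt htm, ht⟩
    refine ⟨Nat.find this, (Nat.find_spec this).1, (Nat.find_spec this).2, fun u hu hu' => ?_⟩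
    exact fun hp => Nat.find_min this hu' ⟨hu, hp⟩
  | succ j ih =>
    obtain ⟨s, hs⟩ := ih
    have : ∃ t, s + K < t ∧ p (X t ω) := by
      obtain ⟨t, ht, htm⟩ := hinf.exists_gt (s + K)
      exact ⟨t, htm, ht⟩
    refine ⟨Nat.find this, Set.mem_iUnion.2 ⟨s, hs, (Nat.find_spec this).1,
      (Nat.find_spec this).2, fun u hu hu' => ?_⟩⟩
    exact fun hp => Nat.find_min this hu' ⟨hu, hp⟩

lemma Dset_congr {j t : ℕ} {ω ω' : Ω} (hagree : ∀ u, u ≤ t → X u ω = X u ω')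
    (h : ω ∈ Dset X p K m j t) : ω' ∈ Dset X p K m j t := by
  induction j generalizing t with
  | zero =>
    refine ⟨h.1, ?_, fun u hu hu' => ?_⟩
    · rw [← hagree t le_rfl]; exact h.2.1
    · rw [← hagree u (le_of_lt hu')]; exact h.2.2 u hu hu'
  | succ j ih =>
    obtain ⟨s, hs⟩ := Set.mem_iUnion.1 h
    have h2 := hs.2.1
    have hst : s ≤ t := by omega
    refine Set.mem_iUnion.2 ⟨s, ih (fun u hu => hagree u (le_trans hu hst)) hs.1, hs.2.1, ?_,
      fun u hu hu' => ?_⟩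
    · rw [← hagree t le_rfl]; exact hs.2.2.1
    · rw [← hagree u (le_of_lt hu')]; exact hs.2.2.2 u hu hu'

lemma Dset_measurable (hXm : ∀ u, Measurable (X u)) (j t : ℕ) :
    MeasurableSet (Dset X p K m j t) := by
  have hps : ∀ u, MeasurableSet {ω : Ω | p (X u ω)} := fun u =>
    hXm u (Set.to_countable {g | p g}).measurableSet
  have hconst : ∀ c : Prop, MeasurableSet {_ω : Ω | c} := by
    intro c
    by_cases hc : c
    · simp [hc]
    · simp [hc]
  have himp : ∀ (c : Prop) (s : Set Ω), MeasurableSet s → MeasurableSet {ω | c → ω ∈ s} := by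
    intro c s hs
    by_cases hc : c
    · simpa [hc] using hs
    · simp [hc]
  induction j generalizing t with
  | zero =>
    have heq : Dset X p K m 0 t = {ω | m ≤ t} ∩ ({ω | p (X t ω)} ∩
        ⋂ u, {ω | m ≤ u → u < t → ¬ p (X u ω)}) := by
      ext ω
      simp only [Dset, Set.mem_setOf_eq, Set.mem_inter_iff, Set.mem_iInter]
    rw [heq]
    exact (hconst _).inter ((hps t).inter (MeasurableSet.iInter fun u =>
      himp _ {ω | u < t → ω ∈ {ω | p (X u ω)}ᶜ} (himp _ _ (hps u).compl)))
  | succ j ih =>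
    have heq : Dset X p K m (j+1) t = ⋃ s : ℕ, (Dset X p K m j s ∩ ({ω | s + K < t} ∩
        ({ω | p (X t ω)} ∩ ⋂ u, {ω | s + K < u → u < t → ¬ p (X u ω)}))) := by
      ext ω
      simp only [Dset, Set.mem_iUnion, Set.mem_setOf_eq, Set.mem_inter_iff, Set.mem_iInter]
    rw [heq]
    exact MeasurableSet.iUnion fun s => (ih s).inter ((hconst _).inter ((hps t).inter
      (MeasurableSet.iInter fun u =>
        himp _ {ω | u < t → ω ∈ {ω | p (X u ω)}ᶜ} (himp _ _ (hps u).compl))))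

end Aux
/-- Let `G = ℤⁿ × H` with `H` a finite abelian group, and let `X` be a homogeneous random
walk on `G` (i.i.d. steps supported on a finite set `S`) started at `0`. If the projected
walk on `ℤⁿ` returns to `0` infinitely often almost surely, and there are `K ∈ ℕ`,
`δ > 0` such that whenever the projection of `X_t` is `0`, the conditional probability
that `X_{t+k} = 0` for some `0 ≤ k ≤ K` is at least `δ`, then `X` returns to `0`
infinitely often almost surely. -/
theorem walk_recurrent_of_projection_recurrent
    {Ω : Type*} [MeasurableSpace Ω] (μ : Measure Ω) [IsProbabilityMeasure μ]
    (n : ℕ) (H : Type*) [AddCommGroup H] [Fintype H]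
    [MeasurableSpace H] [MeasurableSingletonClass H]
    (S : Finset ((Fin n → ℤ) × H))
    (ξ : ℕ → Ω → (Fin n → ℤ) × H) (hmeas : ∀ i, Measurable (ξ i))
    (hindep : iIndepFun ξ μ)
    (hident : ∀ i j : ℕ, Measure.map (ξ i) μ = Measure.map (ξ j) μ)
    (hsupp : ∀ i, ∀ᵐ ω ∂μ, ξ i ω ∈ S)
    (X : ℕ → Ω → (Fin n → ℤ) × H)
    (hX : ∀ k ω, X k ω = ∑ i ∈ Finset.range k, ξ i ω)
    (hproj : ∀ᵐ ω ∂μ, {t : ℕ | (X t ω).1 = 0}.Infinite)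
    (K : ℕ) (δ : ENNReal) (hδ : 0 < δ)
    (hbound : ∀ (t : ℕ) (g : (Fin n → ℤ) × H), g.1 = 0 →
      δ * μ {ω | X t ω = g} ≤
        μ ({ω | ∃ k ≤ K, X (t + k) ω = 0} ∩ {ω | X t ω = g})) :
    ∀ᵐ ω ∂μ, {t : ℕ | X t ω = 0}.Infinite := by
  classical
  -- basic measurability
  haveI : MeasurableAdd₂ ((Fin n → ℤ) × H) := ⟨measurable_of_countable _⟩
  have hXmeas : ∀ t, Measurable (X t) := by
    intro t
    have h : X t = fun ω => ∑ i ∈ Finset.range t, ξ i ω := funext (hX t)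
    rw [h]
    exact Finset.measurable_sum _ fun i _ => hmeas i
  -- the truncated δ
  set δ' := min δ 1 with hδ'
  have hδ'ne : δ' ≠ 0 := (lt_min hδ zero_lt_one).ne' 
  have hδ'le1 : δ' ≤ 1 := min_le_right _ _
  have h1δ : (1 : ENNReal) - δ' < 1 :=
    ENNReal.sub_lt_self ENNReal.one_ne_top one_ne_zero hδ'ne
  -- increments
  have hinc : ∀ s k ω, X (s + k) ω = X s ω + ∑ i ∈ Finset.Ico s (s + k), ξ i ω := by
    intro s k ω
    rw [hX, hX, Finset.range_eq_Ico, Finset.range_eq_Ico]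
    exact (Finset.sum_Ico_consecutive _ (Nat.zero_le s) (Nat.le_add_right s k)).symm
  -- the window events
  set W : ℕ → ((Fin n → ℤ) × H) → Set Ω :=
    fun s g => {ω | ∃ k ≤ K, g + ∑ i ∈ Finset.Ico s (s + k), ξ i ω = 0} with hWdef
  have hWmeas : ∀ s g, MeasurableSet (W s g) := by
    intro s g
    have : W s g = ⋃ k : ℕ, ⋃ _ : k ≤ K,
        (fun ω => ∑ i ∈ Finset.Ico s (s + k), ξ i ω) ⁻¹' {x | g + x = 0} := by
      ext ω
      simp only [hWdef, Set.mem_setOf_eq, Set.mem_iUnion, Set.mem_preimage]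
      exact ⟨fun ⟨k, hk, h⟩ => ⟨k, hk, h⟩, fun ⟨k, hk, h⟩ => ⟨k, hk, h⟩⟩
    rw [this]
    exact MeasurableSet.iUnion fun k => MeasurableSet.iUnion fun _ =>
      (Finset.measurable_sum _ fun i _ => hmeas i) (Set.to_countable _).measurableSet
  -- dependence of W on the block of steps
  have hWdep : ∀ s g, ∀ ω ω' : Ω, (∀ i, s ≤ i → i < s + K → ξ i ω = ξ i ω') →
      ω ∈ W s g → ω' ∈ W s g := by
    rintro s g ω ω' hagree ⟨k, hk, h0⟩
    refine ⟨k, hk, ?_⟩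
    rw [← h0]
    congr 1
    refine Finset.sum_congr rfl fun i hi => ?_
    rw [Finset.mem_Ico] at hi
    exact (hagree i hi.1 (by omega)).symm
  -- dependence of X on past steps
  have hXdep : ∀ s, ∀ ω ω' : Ω, (∀ i, i < s → ξ i ω = ξ i ω') →
      ∀ u, u ≤ s → X u ω = X u ω' := by
    intro s ω ω' hagree u hu
    rw [hX, hX]
    exact Finset.sum_congr rfl fun i hi => hagree i (by
      rw [Finset.mem_range] at hi; omega)
  -- the uniform window bound from hbound
  have hWge : ∀ s (g : (Fin n → ℤ) × H), g.1 = 0 → μ {ω | X s ω = g} ≠ 0 → δ' ≤ μ (W s g) := by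
    intro s g hg hne
    have hset : {ω | ∃ k ≤ K, X (s + k) ω = 0} ∩ {ω | X s ω = g} =
        {ω | X s ω = g} ∩ W s g := by
      ext ω
      simp only [Set.mem_inter_iff, Set.mem_setOf_eq, hWdef]
      constructor
      · rintro ⟨⟨k, hk, h0⟩, hXs⟩
        exact ⟨hXs, k, hk, by rw [← hXs, ← hinc s k ω]; exact h0⟩
      · rintro ⟨hXs, k, hk, h0⟩
        exact ⟨⟨k, hk, by rw [hinc s k ω, hXs]; exact h0⟩, hXs⟩
    have hmul : μ ({ω | X s ω = g} ∩ W s g) = μ {ω | X s ω = g} * μ (W s g) := by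
      refine block_indep μ ξ hmeas hindep s K _ _ ?_ (hWdep s g)
      intro ω ω' hagree hω
      show X s ω' = g
      rw [← hXdep s ω ω' hagree s le_rfl]
      exact hω
    have hb := hbound s g hg
    rw [hset, hmul, mul_comm (μ {ω | X s ω = g})] at hb
    have := (ENNReal.mul_le_mul_iff_left hne (measure_ne_top μ _)).1 hb
    exact le_trans (min_le_left _ _) this
  -- the key claim : for every m, a.s. not (projection zero i.o. and no return after m)
  have key : ∀ m : ℕ, μ ({ω | {t : ℕ | (X t ω).1 = 0}.Infinite} ∩
      {ω | ∀ t, m ≤ t → X t ω ≠ 0}) = 0 := by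
    intro m
    set P : ((Fin n → ℤ) × H) → Prop := fun g => g.1 = 0 with hP
    set NR : ℕ → Set Ω := fun b => {ω | ∀ u, m ≤ u → u ≤ b → X u ω ≠ 0} with hNR
    have hNRmeas : ∀ b, MeasurableSet (NR b) := by
      intro b
      have himp : ∀ (c : Prop) (s : Set Ω), MeasurableSet s →
          MeasurableSet {ω | c → ω ∈ s} := by
        intro c s hs
        by_cases hc : c
        · simpa [hc] using hs
        · simp [hc]
      have : NR b = ⋂ u : ℕ, {ω | m ≤ u → ω ∈ {ω : Ω | u ≤ b → ω ∈ {ω : Ω | X u ω = 0}ᶜ}} := by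
        ext ω
        simp only [hNR, Set.mem_setOf_eq, Set.mem_iInter, Set.mem_compl_iff]
      rw [this]
      exact MeasurableSet.iInter fun u => himp _ _ (himp _ _
        (hXmeas u (MeasurableSet.singleton 0)).compl)
    set Gs : ℕ → Set Ω := fun j => ⋃ t, Dset X P K m j t ∩ NR t with hGs
    have hDmeas : ∀ j t, MeasurableSet (Dset X P K m j t) := fun j t =>
      Dset_measurable hXmeas j t
    have hGmeas : ∀ j, MeasurableSet (Gs j) := fun j =>
      MeasurableSet.iUnion fun t => (hDmeas j t).inter (hNRmeas t)
    -- step inequality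
    have hstep : ∀ j, μ (Gs (j + 1)) ≤ (1 - δ') * μ (Gs j) := by
      intro j
      -- the per-s bound
      have persum : ∀ s, μ (Dset X P K m j s ∩ NR (s + K)) ≤
          (1 - δ') * μ (Dset X P K m j s ∩ NR s) := by
        intro s
        have perh : ∀ h : H, μ (Dset X P K m j s ∩ NR (s + K) ∩
            {ω | X s ω = ((0 : Fin n → ℤ), h)}) ≤
            (1 - δ') * μ (Dset X P K m j s ∩ NR s ∩ {ω | X s ω = ((0 : Fin n → ℤ), h)}) := by
          intro h
          set g : (Fin n → ℤ) × H := ((0 : Fin n → ℤ), h) with hgdef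
          set B : Set Ω := Dset X P K m j s ∩ NR s ∩ {ω | X s ω = g} with hBdef
          by_cases hg0 : g = 0
          · -- left set is empty
            have : Dset X P K m j s ∩ NR (s + K) ∩ {ω | X s ω = g} = ∅ := by
              ext ω
              simp only [Set.mem_inter_iff, Set.mem_setOf_eq, Set.mem_empty_iff_false,
                iff_false, not_and]
              intro hDN hXs
              exact hDN.2 s (Dset_prop hDN.1).1 (Nat.le_add_right s K) (by rw [hXs, hg0])
            simp [this]
          · have hBW : Dset X P K m j s ∩ NR (s + K) ∩ {ω | X s ω = g} ⊆ B \ W s g := by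
              rintro ω ⟨⟨hD, hNRω⟩, hXs⟩
              have hms : m ≤ s := (Dset_prop hD).1
              refine ⟨⟨⟨hD, fun u hu hub => hNRω u hu (by omega)⟩, hXs⟩, ?_⟩
              rintro ⟨k, hk, h0⟩
              refine hNRω (s + k) (by omega) (by omega) ?_
              rw [hinc s k ω, hXs]
              exact h0
            by_cases hBz : μ {ω | X s ω = g} = 0
            · have : μ B = 0 :=
                measure_mono_null (fun ω hω => hω.2) hBz
              refine le_trans (measure_mono hBW) ?_
              refine le_trans (measure_mono Set.diff_subset) ?_
              simp [this]
            · have hδW : δ' ≤ μ (W s g) := hWge s g (by rw [hgdef]) hBz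
              have hmul : μ (B ∩ W s g) = μ B * μ (W s g) := by
                refine block_indep μ ξ hmeas hindep s K _ _ ?_ (hWdep s g)
                rintro ω ω' hagree ⟨⟨hD, hNRω⟩, hXs⟩
                have hXag := hXdep s ω ω' hagree
                refine ⟨⟨Dset_congr (fun u hu => hXag u hu) hD, fun u hu hub => ?_⟩, ?_⟩
                · rw [← hXag u hub]
                  exact hNRω u hu hub
                · show X s ω' = g
                  rw [← hXag s le_rfl]
                  exact hXs
              have hBmeas : MeasurableSet B :=
                ((hDmeas j s).inter (hNRmeas s)).inter
                  (hXmeas s (MeasurableSet.singleton g))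
              have hdiff : μ (B \ W s g) = μ B - μ (B ∩ W s g) := by
                rw [← Set.diff_self_inter]
                exact measure_diff Set.inter_subset_left
                  (hBmeas.inter (hWmeas s g)).nullMeasurableSet (measure_ne_top μ _)
              calc μ (Dset X P K m j s ∩ NR (s + K) ∩ {ω | X s ω = g})
                  ≤ μ (B \ W s g) := measure_mono hBW
                _ = μ B - μ B * μ (W s g) := by rw [hdiff, hmul]
                _ ≤ μ B - μ B * δ' := by
                    exact tsub_le_tsub_left (mul_le_mul_right hδW (μ B)) (μ B)
                _ = (1 - δ') * μ B := by
                    rw [ENNReal.sub_mul (fun _ _ => measure_ne_top μ B), one_mul, mul_comm (μ B)]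
        -- sum over h
        have hcover : Dset X P K m j s ∩ NR (s + K) ⊆
            ⋃ h ∈ (Finset.univ : Finset H), Dset X P K m j s ∩ NR (s + K) ∩
              {ω | X s ω = ((0 : Fin n → ℤ), h)} := by
          intro ω hω
          refine Set.mem_iUnion.2 ⟨(X s ω).2, Set.mem_iUnion.2 ⟨Finset.mem_univ _, hω, ?_⟩⟩
          have h1 : (X s ω).1 = 0 := (Dset_prop hω.1).2
          show X s ω = ((0 : Fin n → ℤ), (X s ω).2)
          exact Prod.ext h1 rfl
        have hcover' : Dset X P K m j s ∩ NR s =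
            ⋃ h ∈ (Finset.univ : Finset H), Dset X P K m j s ∩ NR s ∩
              {ω | X s ω = ((0 : Fin n → ℤ), h)} := by
          apply Set.Subset.antisymm
          · intro ω hω
            refine Set.mem_iUnion.2 ⟨(X s ω).2, Set.mem_iUnion.2 ⟨Finset.mem_univ _, hω, ?_⟩⟩
            have h1 : (X s ω).1 = 0 := (Dset_prop hω.1).2
            show X s ω = ((0 : Fin n → ℤ), (X s ω).2)
            exact Prod.ext h1 rfl
          · refine Set.iUnion₂_subset fun h _ => fun ω hω => hω.1
        have hdisjh : (↑(Finset.univ : Finset H) : Set H).PairwiseDisjoint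
            (fun h => Dset X P K m j s ∩ NR s ∩ {ω | X s ω = ((0 : Fin n → ℤ), h)}) := by
          intro a _ b _ hab
          refine Set.disjoint_left.2 fun ω hω hω' => hab ?_
          exact congrArg Prod.snd (hω.2.symm.trans hω'.2)
        calc μ (Dset X P K m j s ∩ NR (s + K))
            ≤ ∑ h ∈ (Finset.univ : Finset H), μ (Dset X P K m j s ∩ NR (s + K) ∩
              {ω | X s ω = ((0 : Fin n → ℤ), h)}) :=
              le_trans (measure_mono hcover) (measure_biUnion_finset_le _ _)
          _ ≤ ∑ h ∈ (Finset.univ : Finset H), (1 - δ') * μ (Dset X P K m j s ∩ NR s ∩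
              {ω | X s ω = ((0 : Fin n → ℤ), h)}) := Finset.sum_le_sum fun h _ => perh h
          _ = (1 - δ') * ∑ h ∈ (Finset.univ : Finset H), μ (Dset X P K m j s ∩ NR s ∩
              {ω | X s ω = ((0 : Fin n → ℤ), h)}) := by rw [Finset.mul_sum]
          _ = (1 - δ') * μ (Dset X P K m j s ∩ NR s) := by
              have hbu := measure_biUnion_finset (μ := μ) hdisjh fun h _ =>
                ((hDmeas j s).inter (hNRmeas s)).inter
                  (hXmeas s (MeasurableSet.singleton ((0 : Fin n → ℤ), h)))
              rw [← hbu, ← hcover']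
      -- assemble over s
      have hsub : Gs (j + 1) ⊆ ⋃ s, Dset X P K m j s ∩ NR (s + K) := by
        intro ω hω
        obtain ⟨t, ht⟩ := Set.mem_iUnion.1 hω
        obtain ⟨s, hs⟩ := Set.mem_iUnion.1 ht.1
        have hsK := hs.2.1
        exact Set.mem_iUnion.2 ⟨s, hs.1, fun u hu hub => ht.2 u hu (by omega)⟩
      have hdisjD : Pairwise (Function.onFun Disjoint fun t => Dset X P K m j t ∩ NR t) := by
        intro t t' htt'
        refine Set.disjoint_left.2 fun ω hω hω' => htt' ?_
        exact Dset_unique hω.1 hω'.1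
      calc μ (Gs (j + 1)) ≤ μ (⋃ s, Dset X P K m j s ∩ NR (s + K)) := measure_mono hsub
        _ ≤ ∑' s, μ (Dset X P K m j s ∩ NR (s + K)) := measure_iUnion_le _
        _ ≤ ∑' s, (1 - δ') * μ (Dset X P K m j s ∩ NR s) := ENNReal.tsum_le_tsum persum
        _ = (1 - δ') * ∑' s, μ (Dset X P K m j s ∩ NR s) := ENNReal.tsum_mul_left
        _ = (1 - δ') * μ (Gs j) := by
            rw [measure_iUnion hdisjD fun t => (hDmeas j t).inter (hNRmeas t)]
    -- geometric decay
    have hGj : ∀ j, μ (Gs j) ≤ (1 - δ') ^ j := by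
      intro j
      induction j with
      | zero => simpa using prob_le_one
      | succ j ih =>
        calc μ (Gs (j + 1)) ≤ (1 - δ') * μ (Gs j) := hstep j
          _ ≤ (1 - δ') * (1 - δ') ^ j := mul_le_mul_right ih _
          _ = (1 - δ') ^ (j + 1) := (pow_succ' _ _).symm
    -- the bad event is contained in every Gs j
    have hsubG : ∀ j, {ω | {t : ℕ | (X t ω).1 = 0}.Infinite} ∩
        {ω | ∀ t, m ≤ t → X t ω ≠ 0} ⊆ Gs j := by
      intro j ω hω
      obtain ⟨t, ht⟩ := Dset_exists (X := X) (p := P) (K := K) (m := m) hω.1 j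
      exact Set.mem_iUnion.2 ⟨t, ht, fun u hu _ => hω.2 u hu⟩
    have hlim : Filter.Tendsto (fun j : ℕ => (1 - δ') ^ j) Filter.atTop (nhds 0) :=
      ENNReal.tendsto_pow_atTop_nhds_zero_of_lt_one h1δ
    have : μ ({ω | {t : ℕ | (X t ω).1 = 0}.Infinite} ∩
        {ω | ∀ t, m ≤ t → X t ω ≠ 0}) ≤ 0 :=
      ge_of_tendsto' hlim fun j => le_trans (measure_mono (hsubG j)) (hGj j)
    exact le_antisymm this zero_le
  -- assemble over m
  have hnull : μ (⋃ m : ℕ, {ω | {t : ℕ | (X t ω).1 = 0}.Infinite} ∩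
      {ω | ∀ t, m ≤ t → X t ω ≠ 0}) = 0 := measure_iUnion_null key
  have hae := (measure_eq_zero_iff_ae_notMem).1 hnull
  filter_upwards [hproj, hae] with ω hPP hnot
  by_contra hfin
  rw [Set.not_infinite] at hfin
  obtain ⟨b, hb⟩ := hfin.bddAbove
  refine hnot (Set.mem_iUnion.2 ⟨b + 1, hPP, fun t ht h0 => ?_⟩)
  exact absurd (hb h0) (by omega)
end
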